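/- In the cyclic market of Example 6 (n students, n colleges, cyclic preferences, each college capacity 1, total capacity n−1), every nonwasteful matching assigns each student s_i with i ≠ j (for the unique unmatched student s_j) to her most preferred college, and consequently the unmatched student has justified envy toward exactly n−1 students. -/

import Mathlib

/- The cyclic market of Example 6, with `n + 1` students `s_0, …, s_n` and
`n + 1` colleges `c_0, …, c_n` (indices modulo `n + 1`).
Student `s_i` ranks colleges by `rankS`: her `r`-th choice is `c_{i+1+r}`
(so `c_{i+1}` is best and `c_i` is worst); college `c_i` ranks students by
`rankC`: its best student is `s_i` and its worst is `s_{i-1}`.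
Smaller rank means more preferred. -/

def rankS {n : ℕ} (i c : Fin (n + 1)) : ℕ := (c - i - 1).val

def rankC {n : ℕ} (i s : Fin (n + 1)) : ℕ := (s - i).val

/-- Feasibility: each college accepts at most one student and at most
`n = (n+1) - 1` students are matched in total. -/
def FeasCyc {n : ℕ} (μ : Fin (n + 1) → Option (Fin (n + 1))) : Prop :=
  (∀ s s' c, μ s = some c → μ s' = some c → s = s') ∧
    (Finset.univ.filter (fun s => μ s ≠ none)).card ≤ n

/-- `c ≻ₛ μ(s)`: student `s` prefers college `c` to her current assignment
(all colleges are acceptable to all students). -/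
def POverCyc {n : ℕ} (μ : Fin (n + 1) → Option (Fin (n + 1))) (s c : Fin (n + 1)) : Prop :=
  μ s = none ∨ ∃ c', μ s = some c' ∧ rankS s c < rankS s c'

/-- Nonwastefulness: no student claims an empty seat. -/
def NWCyc {n : ℕ} (μ : Fin (n + 1) → Option (Fin (n + 1))) : Prop :=
  ∀ s c, ¬ (POverCyc μ s c ∧ FeasCyc (Function.update μ s (some c)))

/-- `s` has justified envy toward `t`. -/
def EnvyCyc {n : ℕ} (μ : Fin (n + 1) → Option (Fin (n + 1))) (s t : Fin (n + 1)) : Prop :=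
  ∃ c, μ t = some c ∧ POverCyc μ s c ∧ rankC c s < rankC c t

theorem subval {n : ℕ} (a b : Fin (n+1)) :
    (a - b).val = if b.val ≤ a.val then a.val - b.val else a.val + (n+1) - b.val := by
  rw [Fin.sub_def]
  show (n + 1 - b.val + a.val) % (n+1) = _
  split
  · next h =>
    have e : n + 1 - b.val + a.val = (a.val - b.val) + (n+1) := by omega
    rw [e, Nat.add_mod_right, Nat.mod_eq_of_lt (by omega)]
  · next h =>
    have hlt : n + 1 - b.val + a.val < n+1 := by omega
    rw [Nat.mod_eq_of_lt hlt]; omega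

theorem arith12 {n : ℕ} (hn : 1 ≤ n) (c s j : Fin (n+1)) (hs : s ≠ j)
    (hc : (c - j - 1).val ≠ 0) (h : (c - s - 1).val ≤ (j - s).val) :
    (s - j).val ≤ (c - j - 1).val := by
  have h1 : ((1 : Fin (n+1))).val = 1 := by
    rw [Fin.val_one', Nat.mod_eq_of_lt (by omega)]
  have hs' : s.val ≠ j.val := fun e => hs (Fin.ext e)
  have hc' := c.isLt; have hsl := s.isLt; have hjl := j.isLt
  simp only [subval, h1] at h hc ⊢
  split_ifs at h hc ⊢ <;> omega


/-- In the cyclic market with `n + 1 ≥ 2` students, every feasible nonwasteful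
matching assigns each matched student `s_i` (i.e. each student other than the
unique unmatched student `s_j`) to her most preferred college `c_{i+1}`, and
consequently the unmatched student has justified envy toward exactly `n`
students (all others). -/
theorem stmt12 (n : ℕ) (hn : 1 ≤ n) (μ : Fin (n + 1) → Option (Fin (n + 1)))
    (hfeas : FeasCyc μ) (hnw : NWCyc μ) :
    ∃ j, μ j = none ∧ (∀ s, s ≠ j → μ s = some (s + 1)) ∧
      Set.ncard {t | EnvyCyc μ j t} = n := by
  obtain ⟨hinj, hcard⟩ := hfeas
  set M : Finset (Fin (n+1)) := Finset.univ.filter (fun s => μ s ≠ none) with hM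
  -- step 1 : some unmatched student j
  obtain ⟨j, hj⟩ : ∃ j, μ j = none := by
    by_contra h
    push_neg at h
    have hMu : M = Finset.univ := by
      ext s; simp [hM, h s]
    rw [hMu, Finset.card_univ, Fintype.card_fin] at hcard; omega
  -- step 2 : uniqueness of the unmatched student
  have huniq : ∀ s, s ≠ j → ∃ c, μ s = some c := by
    intro s hs
    by_contra h
    push_neg at h
    have hs0 : μ s = none := by
      cases h' : μ s with
      | none => rfl
      | some c => exact absurd h' (h c)
    -- matched students ≤ n - 1
    have hMsub : M ⊆ (Finset.univ.erase j).erase s := by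
      intro t ht
      simp only [hM, Finset.mem_filter] at ht
      simp only [Finset.mem_erase, Finset.mem_univ, and_true]
      refine ⟨fun e => ht.2 (e ▸ hs0), fun e => ht.2 (e ▸ hj)⟩
    have hMcard : M.card ≤ n - 1 := by
      have := Finset.card_le_card hMsub
      rw [Finset.card_erase_of_mem (by simp [hs]), Finset.card_erase_of_mem (by simp),
        Finset.card_univ, Fintype.card_fin] at this
      omega
    -- find an unoccupied college
    obtain ⟨c, hc⟩ : ∃ c, ∀ t, μ t ≠ some c := by
      by_contra h2
      push_neg at h2
      choose f hf using h2
      have hfinj : Function.Injective f := by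
        intro a b e
        have := (hf a).symm.trans (e ▸ hf b)
        exact (Option.some_injective _ this).symm ▸ rfl
      have himg : (Finset.univ.image f) ⊆ M := by
        intro x hx
        simp only [Finset.mem_image] at hx
        obtain ⟨a, -, rfl⟩ := hx
        simp [hM, hf a]
      have := Finset.card_le_card himg
      rw [Finset.card_image_of_injective _ hfinj, Finset.card_univ, Fintype.card_fin] at this
      omega
    -- s can claim c
    refine hnw s c ⟨Or.inl hs0, ?_, ?_⟩
    · intro t t' d ht ht'
      rcases eq_or_ne t s with rfl | hts
      · rcases eq_or_ne t' t with rfl | ht's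
        · rfl
        · rw [Function.update_self] at ht
          rw [Function.update_of_ne ht's] at ht'
          exact absurd (ht ▸ ht' : μ t' = some c) (hc t')
      · rw [Function.update_of_ne hts] at ht
        rcases eq_or_ne t' s with rfl | ht's
        · rw [Function.update_self] at ht'
          exact absurd (ht' ▸ ht : μ t = some c) (hc t)
        · rw [Function.update_of_ne ht's] at ht'
          exact hinj t t' d ht ht'
    · have hsub2 : (Finset.univ.filter (fun t => Function.update μ s (some c) t ≠ none))
          ⊆ insert s M := by
        intro t ht
        simp only [Finset.mem_filter, Finset.mem_univ, true_and] at ht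
        rcases eq_or_ne t s with rfl | hts
        · exact Finset.mem_insert_self _ _
        · rw [Function.update_of_ne hts] at ht
          exact Finset.mem_insert_of_mem (by simp [hM, ht])
      calc (Finset.univ.filter (fun t => Function.update μ s (some c) t ≠ none)).card
          ≤ (insert s M).card := Finset.card_le_card hsub2
        _ ≤ M.card + 1 := Finset.card_insert_le _ _
        _ ≤ n := by omega
  -- step 3 : the unique unoccupied college c₀
  obtain ⟨c₀, hc₀⟩ : ∃ c₀, ∀ t, μ t ≠ some c₀ := by
    by_contra h2
    push_neg at h2
    choose f hf using h2
    have hfinj : Function.Injective f := by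
      intro a b e
      have := (hf a).symm.trans (e ▸ hf b)
      exact (Option.some_injective _ this).symm ▸ rfl
    have himg : (Finset.univ.image f) ⊆ Finset.univ.erase j := by
      intro x hx
      simp only [Finset.mem_image] at hx
      obtain ⟨a, -, rfl⟩ := hx
      simp only [Finset.mem_erase, Finset.mem_univ, and_true]
      intro e
      exact absurd (e ▸ hf a) (by simp [hj])
    have := Finset.card_le_card himg
    rw [Finset.card_image_of_injective _ hfinj, Finset.card_univ,
      Finset.card_erase_of_mem (by simp), Finset.card_univ, Fintype.card_fin] at this
    omega
  -- key nonwastefulness consequence : matched students weakly prefer their seat to c₀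
  have key : ∀ s c, μ s = some c → rankS s c ≤ rankS s c₀ := by
    intro s c hc
    by_contra hlt
    push_neg at hlt
    refine hnw s c₀ ⟨Or.inr ⟨c, hc, hlt⟩, ?_, ?_⟩
    · intro t t' d ht ht'
      rcases eq_or_ne t s with rfl | hts
      · rcases eq_or_ne t' t with rfl | ht's
        · rfl
        · rw [Function.update_self] at ht
          rw [Function.update_of_ne ht's] at ht'
          exact absurd (ht ▸ ht' : μ t' = some c₀) (hc₀ t')
      · rw [Function.update_of_ne hts] at ht
        rcases eq_or_ne t' s with rfl | ht's
        · rw [Function.update_self] at ht'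
          exact absurd (ht' ▸ ht : μ t = some c₀) (hc₀ t)
        · rw [Function.update_of_ne ht's] at ht'
          exact hinj t t' d ht ht'
    · have hEq : (Finset.univ.filter (fun t => Function.update μ s (some c₀) t ≠ none)) = M := by
        ext t
        simp only [Finset.mem_filter, Finset.mem_univ, true_and, hM]
        rcases eq_or_ne t s with rfl | hts
        · simp [hc]
        · rw [Function.update_of_ne hts]
      rw [hEq]; exact hcard
  -- step 4 : c₀ = j + 1
  have hc₀j : c₀ = j + 1 := by
    by_contra hne
    have hs₀ : c₀ - 1 ≠ j := by
      intro e
      exact hne (by rw [← e]; open Fin.CommRing in ring)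
    obtain ⟨c, hc⟩ := huniq _ hs₀
    have h1 := key _ _ hc
    have hr0 : rankS (c₀ - 1) c₀ = 0 := by
      show (c₀ - (c₀ - 1) - 1).val = 0
      have : c₀ - (c₀ - 1) - 1 = 0 := by open Fin.CommRing in ring
      rw [this]; rfl
    rw [hr0, Nat.le_zero] at h1
    have h2 : c - (c₀ - 1) - 1 = 0 := Fin.ext h1
    have hcc : c = c₀ := by open Fin.CommRing in linear_combination h2
    exact hc₀ _ (hcc ▸ hc)
  subst hc₀j
  -- step 5 : the bijection φ
  set φ : Fin (n+1) → Fin (n+1) := fun s => (μ s).getD (j+1) - j - 1 with hφ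
  have hφinj : Function.Injective φ := by
    intro a b e
    have e' : (μ a).getD (j+1) = (μ b).getD (j+1) := by
      have := congrArg (· + (j + 1)) e
      simpa [hφ, sub_sub, sub_add_cancel] using this
    by_cases ha : a = j
    · by_cases hb : b = j
      · rw [ha, hb]
      · obtain ⟨cb, hcb⟩ := huniq b hb
        rw [ha, hj, hcb, Option.getD_none, Option.getD_some] at e'
        exact absurd (hcb.trans (congrArg some e'.symm)) (hc₀ b)
    · obtain ⟨ca, hca⟩ := huniq a ha
      by_cases hb : b = j
      · rw [hb, hj, hca, Option.getD_some, Option.getD_none] at e'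
        exact absurd (hca.trans (congrArg some e')) (hc₀ a)
      · obtain ⟨cb, hcb⟩ := huniq b hb
        rw [hca, hcb, Option.getD_some, Option.getD_some] at e'
        exact hinj a b ca hca (by rw [hcb, e'])
  have hφbij : Function.Bijective φ := Finite.injective_iff_bijective.mp hφinj
  have hψbij : Function.Bijective (fun s : Fin (n+1) => s - j) :=
    Finite.injective_iff_bijective.mp (fun a b e => by
      have := congrArg (· + j) e
      simpa [sub_add_cancel] using this)
  have hge : ∀ s, (s - j).val ≤ (φ s).val := by
    intro s
    rcases eq_or_ne s j with rfl | hs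
    · simp [hφ, hj]
    · obtain ⟨c, hc⟩ := huniq s hs
      have h1 := key s c hc
      have hcne : (c - j - 1).val ≠ 0 := by
        intro e
        have h0 : c - j - 1 = 0 := Fin.ext e
        have hcc : c = j + 1 := by open Fin.CommRing in linear_combination h0
        exact hc₀ s (hcc ▸ hc)
      have h2 : (c - s - 1).val ≤ (j - s).val := by
        have : rankS s (j + 1) = (j - s).val := by
          show (j + 1 - s - 1).val = (j - s).val
          congr 1; open Fin.CommRing in ring
        rw [this] at h1; exact h1
      have := arith12 hn c s j hs hcne h2
      simpa [hφ, hc] using this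
  have hsum1 : ∑ s : Fin (n+1), (φ s).val = ∑ c : Fin (n+1), c.val :=
    Fintype.sum_bijective φ hφbij _ _ (fun s => rfl)
  have hsum2 : ∑ s : Fin (n+1), (s - j).val = ∑ c : Fin (n+1), c.val :=
    Fintype.sum_bijective _ hψbij _ _ (fun s => rfl)
  have heq : ∀ s, (s - j).val = (φ s).val := by
    by_contra h
    push_neg at h
    obtain ⟨s, hs⟩ := h
    have hlt : (s - j).val < (φ s).val := lt_of_le_of_ne (hge s) hs
    have : ∑ s : Fin (n+1), (s - j).val < ∑ s : Fin (n+1), (φ s).val :=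
      Finset.sum_lt_sum (fun i _ => hge i) ⟨s, Finset.mem_univ s, hlt⟩
    omega
  have hmatch : ∀ s, s ≠ j → μ s = some (s + 1) := by
    intro s hs
    obtain ⟨c, hc⟩ := huniq s hs
    have h1 : s - j = c - j - 1 := Fin.ext (by simpa [hφ, hc] using heq s)
    have : c = s + 1 := by open Fin.CommRing in linear_combination h1.symm
    rw [hc, this]
  -- step 6 : the envy set
  refine ⟨j, hj, hmatch, ?_⟩
  have hset : {t | EnvyCyc μ j t} = {t | t ≠ j} := by
    ext t
    simp only [Set.mem_setOf_eq]
    constructor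
    · rintro ⟨c, htc, -, -⟩ 
      intro e
      rw [e, hj] at htc; exact nomatch htc
    · intro ht
      refine ⟨t + 1, hmatch t ht, Or.inl hj, ?_⟩
      show (j - (t + 1)).val < (t - (t + 1)).val
      have hne : j - (t + 1) ≠ t - (t + 1) := by
        intro e
        have := congrArg (· + (t + 1)) e
        simp only [sub_add_cancel] at this
        exact ht this.symm
      have h2 : (t - (t + 1)).val = n := by
        have h1 : ((1 : Fin (n+1))).val = 1 := by
          rw [Fin.val_one', Nat.mod_eq_of_lt (by omega)]
        have e : t - (t + 1) = 0 - 1 := by open Fin.CommRing in ring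
        rw [e, subval]
        simp only [Fin.val_zero, h1]
        rw [if_neg (by omega)]
        omega
      rw [h2]
      have := (j - (t + 1)).isLt
      have hne' : (j - (t + 1)).val ≠ n := by
        intro e
        exact hne (Fin.ext (by rw [e, h2]))
      omega
  rw [hset]
  have : {t : Fin (n+1) | t ≠ j} = ↑((Finset.univ : Finset (Fin (n+1))).erase j) := by
    ext t; simp
  rw [this, Set.ncard_coe_finset, Finset.card_erase_of_mem (Finset.mem_univ _),
    Finset.card_univ, Fintype.card_fin]
  omega
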